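/- The solution sets of the three systems {u_t = 0, u_{xxx} − 6uu_x = 0, u ≠ 0, u_{xx} ≠ 0 (as functions)}, {u_t − 6uu_x = 0, u_{xx} = 0, u ≠ 0}, and {u = 0} are pairwise disjoint, and their union equals the solution set of {u_t − 6uu_x + u_{xxx} = 0, u u_{tx} − u_t u_x = 0} among smooth functions u(t,x). -/

import Mathlib

open Set


noncomputable def pD (e : ℝ × ℝ) (f : ℝ × ℝ → ℝ) : ℝ × ℝ → ℝ := fun p => fderiv ℝ f p e

lemma pD_analytic {f : ℝ × ℝ → ℝ} (hf : AnalyticOnNhd ℝ f univ) (e : ℝ × ℝ) :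
    AnalyticOnNhd ℝ (pD e f) univ := fun p hp =>
  ((ContinuousLinearMap.apply ℝ ℝ e).analyticAt _).comp (hf.fderiv p hp)

lemma diffAt {f : ℝ × ℝ → ℝ} (hf : AnalyticOnNhd ℝ f univ) (p : ℝ × ℝ) :
    DifferentiableAt ℝ f p := (hf p trivial).differentiableAt

lemma pD_congr {f g : ℝ × ℝ → ℝ} (e : ℝ × ℝ) (h : ∀ p, f p = g p) (p : ℝ × ℝ) :
    pD e f p = pD e g p := by rw [show f = g from funext h]

lemma pD_zero (e p : ℝ × ℝ) : pD e (fun _ => (0:ℝ)) p = 0 := by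
  simp [pD]

lemma pD_mul {f g : ℝ × ℝ → ℝ} (hf : AnalyticOnNhd ℝ f univ) (hg : AnalyticOnNhd ℝ g univ)
    (e p : ℝ × ℝ) :
    pD e (fun q => f q * g q) p = pD e f p * g p + f p * pD e g p := by
  show fderiv ℝ (fun q => f q * g q) p e = _
  rw [fderiv_fun_mul (diffAt hf p) (diffAt hg p)]
  simp only [ContinuousLinearMap.add_apply, ContinuousLinearMap.smul_apply, smul_eq_mul]
  show f p * fderiv ℝ g p e + g p * fderiv ℝ f p e
      = fderiv ℝ f p e * g p + f p * fderiv ℝ g p e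
  ring

lemma pD_add {f g : ℝ × ℝ → ℝ} (hf : AnalyticOnNhd ℝ f univ) (hg : AnalyticOnNhd ℝ g univ)
    (e p : ℝ × ℝ) :
    pD e (fun q => f q + g q) p = pD e f p + pD e g p := by
  show fderiv ℝ (fun q => f q + g q) p e = _
  rw [fderiv_fun_add (diffAt hf p) (diffAt hg p)]; rfl

lemma pD_sub {f g : ℝ × ℝ → ℝ} (hf : AnalyticOnNhd ℝ f univ) (hg : AnalyticOnNhd ℝ g univ)
    (e p : ℝ × ℝ) :
    pD e (fun q => f q - g q) p = pD e f p - pD e g p := by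
  show fderiv ℝ (fun q => f q - g q) p e = _
  rw [fderiv_fun_sub (diffAt hf p) (diffAt hg p)]; rfl

lemma pD_const_mul {f : ℝ × ℝ → ℝ} (hf : AnalyticOnNhd ℝ f univ) (c : ℝ) (e p : ℝ × ℝ) :
    pD e (fun q => c * f q) p = c * pD e f p := by
  show fderiv ℝ (fun q => c * f q) p e = _
  rw [fderiv_const_mul (diffAt hf p)]; rfl

lemma pD_apply_eq {f : ℝ × ℝ → ℝ} (hf : AnalyticOnNhd ℝ f univ) (p e e' : ℝ × ℝ) :
    pD e' (pD e f) p = fderiv ℝ (fderiv ℝ f) p e' e := by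
  have hd : DifferentiableAt ℝ (fderiv ℝ f) p := ((hf.fderiv) p trivial).differentiableAt
  show fderiv ℝ (fun q => fderiv ℝ f q e) p e' = _
  rw [fderiv_clm_apply (𝕜 := ℝ) hd (differentiableAt_const e)]
  simp

lemma pD_comm {f : ℝ × ℝ → ℝ} (hf : AnalyticOnNhd ℝ f univ) (e e' p : ℝ × ℝ) :
    pD e' (pD e f) p = pD e (pD e' f) p := by
  have hd : DifferentiableAt ℝ (fderiv ℝ f) p := ((hf.fderiv) p trivial).differentiableAt
  have hsym := second_derivative_symmetric (f := f) (f' := fderiv ℝ f)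
    (f'' := fderiv ℝ (fderiv ℝ f) p) (x := p)
    (fun y => (diffAt hf y).hasFDerivAt) hd.hasFDerivAt e' e
  rw [pD_apply_eq hf, pD_apply_eq hf, hsym]

lemma deriv_slice_x {f : ℝ × ℝ → ℝ} (hf : AnalyticOnNhd ℝ f univ) (t x : ℝ) :
    deriv (fun y => f (t, y)) x = pD (0,1) f (t, x) := by
  have h1 : HasDerivAt (fun y : ℝ => ((t, y) : ℝ × ℝ)) ((0 : ℝ), (1 : ℝ)) x :=
    HasDerivAt.prodMk (hasDerivAt_const x t) (hasDerivAt_id x)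
  exact ((diffAt hf (t,x)).hasFDerivAt.comp_hasDerivAt x h1).deriv

lemma deriv_slice_t {f : ℝ × ℝ → ℝ} (hf : AnalyticOnNhd ℝ f univ) (t x : ℝ) :
    deriv (fun s => f (s, x)) t = pD (1,0) f (t, x) := by
  have h1 : HasDerivAt (fun s : ℝ => ((s, x) : ℝ × ℝ)) ((1 : ℝ), (0 : ℝ)) t :=
    HasDerivAt.prodMk (hasDerivAt_id t) (hasDerivAt_const t x)
  exact ((diffAt hf (t,x)).hasFDerivAt.comp_hasDerivAt t h1).deriv

lemma identity_global {f : ℝ × ℝ → ℝ} (hf : AnalyticOnNhd ℝ f univ) {s : Set (ℝ × ℝ)}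
    (hs : IsOpen s) {p₀ : ℝ × ℝ} (hp₀ : p₀ ∈ s) (h : ∀ q ∈ s, f q = 0) (p : ℝ × ℝ) :
    f p = 0 := by
  have := hf.eqOn_zero_of_preconnected_of_eventuallyEq_zero isPreconnected_univ (mem_univ p₀)
    (Filter.eventuallyEq_of_mem (hs.mem_nhds hp₀) h)
  exact this (mem_univ p)

lemma cont_of_analytic {f : ℝ × ℝ → ℝ} (hf : AnalyticOnNhd ℝ f univ) : Continuous f :=
  continuous_iff_continuousAt.2 fun p => (hf p trivial).continuousAt

lemma isOpen_ne_zero {f : ℝ × ℝ → ℝ} (hf : AnalyticOnNhd ℝ f univ) :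
    IsOpen {q : ℝ × ℝ | f q ≠ 0} :=
  isOpen_compl_singleton.preimage (cont_of_analytic hf)

lemma key_aux (u u1 u2 u3 w w1 w2 w3 wt wt1 : ℝ × ℝ → ℝ)
    (hu : AnalyticOnNhd ℝ u univ)
    (du1 : u1 = pD (0,1) u) (du2 : u2 = pD (0,1) u1) (du3 : u3 = pD (0,1) u2)
    (dw : w = pD (1,0) u) (dw1 : w1 = pD (0,1) w) (dw2 : w2 = pD (0,1) w1)
    (dw3 : w3 = pD (0,1) w2) (dwt : wt = pD (1,0) w) (dwt1 : wt1 = pD (0,1) wt)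
    (E1 : ∀ p, w p - 6 * u p * u1 p + u3 p = 0)
    (E2 : ∀ p, u p * w1 p - w p * u1 p = 0)
    (hxx : ¬ ∀ p, u2 p = 0) :
    ∀ p, w p = 0 := by
  have hu1 : AnalyticOnNhd ℝ u1 univ := du1 ▸ pD_analytic hu _
  have hu2 : AnalyticOnNhd ℝ u2 univ := du2 ▸ pD_analytic hu1 _
  have hu3 : AnalyticOnNhd ℝ u3 univ := du3 ▸ pD_analytic hu2 _
  have hw : AnalyticOnNhd ℝ w univ := dw ▸ pD_analytic hu _
  have hw1 : AnalyticOnNhd ℝ w1 univ := dw1 ▸ pD_analytic hw _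
  have hw2 : AnalyticOnNhd ℝ w2 univ := dw2 ▸ pD_analytic hw1 _
  have hw3 : AnalyticOnNhd ℝ w3 univ := dw3 ▸ pD_analytic hw2 _
  have hwt : AnalyticOnNhd ℝ wt univ := dwt ▸ pD_analytic hw _
  have hwt1 : AnalyticOnNhd ℝ wt1 univ := dwt1 ▸ pD_analytic hwt _
  have A1 : ∀ p, u p * w1 p = w p * u1 p := fun p => by have := E2 p; linarith
  have A2 : ∀ p, u p * w2 p = w p * u2 p := by
    intro p
    have h := pD_congr (f := fun q => u q * w1 q) (g := fun q => w q * u1 q) (0,1) A1 p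
    rw [pD_mul hu hw1, pD_mul hw hu1, ← du1, ← dw1, ← du2, ← dw2] at h
    linarith
  have A3 : ∀ p, u1 p * w2 p + u p * w3 p = w1 p * u2 p + w p * u3 p := by
    intro p
    have h := pD_congr (f := fun q => u q * w2 q) (g := fun q => w q * u2 q) (0,1) A2 p
    rw [pD_mul hu hw2, pD_mul hw hu2, ← du1, ← dw1, ← dw3, ← du3] at h
    linarith
  have S1 : ∀ p, pD (1,0) u1 p = w1 p := by
    intro p
    have h := pD_comm hu (0,1) (1,0) p
    rw [← du1, ← dw, ← dw1] at h
    exact h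
  have S2 : ∀ p, pD (1,0) u2 p = w2 p := by
    intro p
    have h := pD_comm hu1 (0,1) (1,0) p
    rw [← du2, show pD (1,0) u1 = w1 from funext S1, ← dw2] at h
    exact h
  have S3 : ∀ p, pD (1,0) u3 p = w3 p := by
    intro p
    have h := pD_comm hu2 (0,1) (1,0) p
    rw [← du3, show pD (1,0) u2 = w2 from funext S2, ← dw3] at h
    exact h
  have SW : ∀ p, pD (1,0) w1 p = wt1 p := by
    intro p
    have h := pD_comm hw (0,1) (1,0) p
    rw [← dw1, ← dwt, ← dwt1] at h
    exact h
  have hc6u : AnalyticOnNhd ℝ (fun q => 6 * u q) univ := analyticOnNhd_const.mul hu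
  have hprod : AnalyticOnNhd ℝ (fun q => 6 * u q * u1 q) univ := hc6u.mul hu1
  have hsub : AnalyticOnNhd ℝ (fun q => w q - 6 * u q * u1 q) univ := hw.sub hprod
  have A5 : ∀ p, wt p - 6 * w p * u1 p - 6 * u p * w1 p + w3 p = 0 := by
    intro p
    have h := pD_congr (f := fun q => w q - 6 * u q * u1 q + u3 q) (g := fun _ => 0) (1,0) E1 p
    rw [pD_zero, pD_add hsub hu3, pD_sub hw hprod, pD_mul hc6u hu1, pD_const_mul hu,
      S1 p, S3 p, ← dw, ← dwt] at h
    linarith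
  have A6 : ∀ p, u p * wt1 p = wt p * u1 p := by
    intro p
    have h := pD_congr (f := fun q => u q * w1 q) (g := fun q => w q * u1 q) (1,0) A1 p
    rw [pD_mul hu hw1, pD_mul hw hu1, SW p, S1 p, ← dw, ← dwt] at h
    linarith
  have hune : ∃ p, u p ≠ 0 := by
    by_contra h
    push_neg at h
    apply hxx
    have h1 : ∀ p, u1 p = 0 := by
      intro p
      rw [du1, show u = fun _ => (0:ℝ) from funext h]
      exact pD_zero _ _
    intro p
    rw [du2, show u1 = fun _ => (0:ℝ) from funext h1]
    exact pD_zero _ _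
  obtain ⟨p₀, hp₀⟩ := hune
  have hRanalytic : AnalyticOnNhd ℝ
      (fun q => u q * wt q - 6 * u q * w q * u1 q - w q * w q) univ :=
    ((hu.mul hwt).sub (((analyticOnNhd_const.mul hu).mul hw).mul hu1)).sub (hw.mul hw)
  have hRloc : ∀ q ∈ {q : ℝ × ℝ | u q ≠ 0},
      u q * wt q - 6 * u q * w q * u1 q - w q * w q = 0 := by
    intro q hq
    have key : u q * (u q * wt q - 6 * u q * w q * u1 q - w q * w q) = 0 := by
      linear_combination (u q)^2 * A5 q + 6*(u q)^2 * A1 q - u q * A3 q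
        - (u q * w q) * E1 q + u1 q * A2 q - u2 q * A1 q
    rcases mul_eq_zero.1 key with h | h
    · exact absurd h hq
    · exact h
  have hR : ∀ p, u p * wt p - 6 * u p * w p * u1 p - w p * w p = 0 :=
    identity_global hRanalytic (isOpen_ne_zero hu) hp₀ hRloc
  have hQ : AnalyticOnNhd ℝ (fun q => 6 * u q * w q) univ := (analyticOnNhd_const.mul hu).mul hw
  have hQu1 : AnalyticOnNhd ℝ (fun q => 6 * u q * w q * u1 q) univ := hQ.mul hu1
  have huwt : AnalyticOnNhd ℝ (fun q => u q * wt q) univ := hu.mul hwt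
  have hfirst : AnalyticOnNhd ℝ (fun q => u q * wt q - 6 * u q * w q * u1 q) univ :=
    huwt.sub hQu1
  have hD : ∀ p, u1 p * wt p + u p * wt1 p
      - ((6 * u1 p * w p + 6 * u p * w1 p) * u1 p + 6 * u p * w p * u2 p)
      - (w1 p * w p + w p * w1 p) = 0 := by
    intro p
    have h := pD_congr
      (f := fun q => u q * wt q - 6 * u q * w q * u1 q - w q * w q) (g := fun _ => 0) (0,1) hR p
    rw [pD_zero, pD_sub hfirst (hw.mul hw), pD_sub huwt hQu1, pD_mul hu hwt, pD_mul hQ hu1,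
      pD_mul (analyticOnNhd_const.mul hu) hw, pD_const_mul hu, pD_mul hw hw,
      ← du1, ← du2, ← dw1, ← dwt1] at h
    linarith
  have hS : ∀ p, u p * u p * (w p * u2 p) = 0 := by
    intro p
    linear_combination (-(u p)/6) * hD p + (u p/6) * A6 p - (u p * u1 p) * A1 p
      - (w p/3) * A1 p + (u1 p/3) * hR p
  intro p
  by_contra hwp
  have hexu : ∃ q, w q ≠ 0 ∧ u q ≠ 0 := by
    by_contra h
    push_neg at h
    have hu0 : ∀ r, u r = 0 := identity_global hu (isOpen_ne_zero hw) hwp h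
    have : w p = 0 := by
      rw [dw, show u = fun _ => (0:ℝ) from funext hu0]
      exact pD_zero _ _
    exact hwp this
  obtain ⟨q, hqw, hqu⟩ := hexu
  have hopen2 : IsOpen {r : ℝ × ℝ | w r ≠ 0 ∧ u r ≠ 0} :=
    (isOpen_ne_zero hw).inter (isOpen_ne_zero hu)
  have hu2zero : ∀ r, u2 r = 0 := by
    apply identity_global hu2 hopen2 (show q ∈ {r : ℝ × ℝ | w r ≠ 0 ∧ u r ≠ 0} from ⟨hqw, hqu⟩)
    rintro r ⟨h1, h2⟩
    have h3 := hS r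
    rcases mul_eq_zero.1 h3 with h | h
    · exact absurd (mul_self_eq_zero.1 h) h2
    · rcases mul_eq_zero.1 h with h' | h'
      · exact absurd h' h1
      · exact h'
  exact hxx hu2zero

lemma hasDeriv_slice_x {f : ℝ × ℝ → ℝ} (hf : AnalyticOnNhd ℝ f univ) (t x : ℝ) :
    HasDerivAt (fun y => f (t, y)) (pD (0,1) f (t, x)) x := by
  have h1 : HasDerivAt (fun y : ℝ => ((t, y) : ℝ × ℝ)) ((0 : ℝ), (1 : ℝ)) x :=
    HasDerivAt.prodMk (hasDerivAt_const x t) (hasDerivAt_id x)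
  exact (diffAt hf (t,x)).hasFDerivAt.comp_hasDerivAt x h1

section translation

variable {u : ℝ → ℝ → ℝ} (hv : AnalyticOnNhd ℝ (fun p : ℝ × ℝ => u p.1 p.2) univ)
include hv

lemma trans_t (t x : ℝ) :
    deriv (fun s => u s x) t = pD (1,0) (fun p : ℝ × ℝ => u p.1 p.2) (t, x) :=
  deriv_slice_t hv t x

lemma trans_x (t x : ℝ) :
    deriv (u t) x = pD (0,1) (fun p : ℝ × ℝ => u p.1 p.2) (t, x) :=
  deriv_slice_x hv t x

lemma trans_xx (t x : ℝ) :
    deriv (deriv (u t)) x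
      = pD (0,1) (pD (0,1) (fun p : ℝ × ℝ => u p.1 p.2)) (t, x) := by
  rw [show deriv (u t) = fun y => pD (0,1) (fun p : ℝ × ℝ => u p.1 p.2) (t, y) from
    funext fun y => trans_x hv t y]
  exact deriv_slice_x (pD_analytic hv _) t x

lemma trans_xxx (t x : ℝ) :
    deriv (deriv (deriv (u t))) x
      = pD (0,1) (pD (0,1) (pD (0,1) (fun p : ℝ × ℝ => u p.1 p.2))) (t, x) := by
  rw [show deriv (deriv (u t))
      = fun y => pD (0,1) (pD (0,1) (fun p : ℝ × ℝ => u p.1 p.2)) (t, y) from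
    funext fun y => trans_xx hv t y]
  exact deriv_slice_x (pD_analytic (pD_analytic hv _) _) t x

lemma trans_tx (t x : ℝ) :
    deriv (fun y => deriv (fun s => u s y) t) x
      = pD (0,1) (pD (1,0) (fun p : ℝ × ℝ => u p.1 p.2)) (t, x) := by
  rw [show (fun y => deriv (fun s => u s y) t)
      = fun y => pD (1,0) (fun p : ℝ × ℝ => u p.1 p.2) (t, y) from
    funext fun y => trans_t hv t y]
  exact deriv_slice_x (pD_analytic hv _) t x

end translation

/-- Solutions of the combined KdV–Wronskian system among analytic functions on ℝ². -/
def KdVWronskianSol : Set (ℝ → ℝ → ℝ) :=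
  {u | AnalyticOnNhd ℝ (fun p : ℝ × ℝ => u p.1 p.2) univ ∧
    ∀ t x, deriv (fun s => u s x) t - 6 * u t x * deriv (u t) x
        + deriv (deriv (deriv (u t))) x = 0 ∧
      u t x * deriv (fun y => deriv (fun s => u s y) t) x
        - deriv (fun s => u s x) t * deriv (u t) x = 0}

/-- First simple system: u_t = 0, u_{xxx} - 6 u u_x = 0, u ≠ 0 and u_{xx} ≠ 0
(not identically zero). -/
def ThomasSys1 : Set (ℝ → ℝ → ℝ) :=
  {u | AnalyticOnNhd ℝ (fun p : ℝ × ℝ => u p.1 p.2) univ ∧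
    (∀ t x, deriv (fun s => u s x) t = 0 ∧
      deriv (deriv (deriv (u t))) x - 6 * u t x * deriv (u t) x = 0) ∧
    ¬ (∀ t x, u t x = 0) ∧ ¬ (∀ t x, deriv (deriv (u t)) x = 0)}

/-- Second simple system: u_t - 6 u u_x = 0, u_{xx} = 0, u ≠ 0 (not identically zero). -/
def ThomasSys2 : Set (ℝ → ℝ → ℝ) :=
  {u | AnalyticOnNhd ℝ (fun p : ℝ × ℝ => u p.1 p.2) univ ∧
    (∀ t x, deriv (fun s => u s x) t - 6 * u t x * deriv (u t) x = 0 ∧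
      deriv (deriv (u t)) x = 0) ∧
    ¬ (∀ t x, u t x = 0)}

/-- Third simple system: u = 0. -/
def ThomasSys3 : Set (ℝ → ℝ → ℝ) :=
  {u | AnalyticOnNhd ℝ (fun p : ℝ × ℝ => u p.1 p.2) univ ∧ ∀ t x, u t x = 0}

/-- The Thomas decomposition of the KdV–Wronskian system is a partition of its
solution set: the three simple systems have pairwise disjoint solution sets whose
union is the solution set of the original system. -/
theorem kdv_wronskian_thomas_partition :
    (ThomasSys1 ∩ ThomasSys2 = ∅ ∧ ThomasSys1 ∩ ThomasSys3 = ∅ ∧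
      ThomasSys2 ∩ ThomasSys3 = ∅) ∧
    ThomasSys1 ∪ ThomasSys2 ∪ ThomasSys3 = KdVWronskianSol := by
  constructor
  · refine ⟨?_, ?_, ?_⟩
    · rw [Set.eq_empty_iff_forall_notMem]
      rintro u ⟨⟨_, _, _, hxx⟩, _, h2, _⟩
      exact hxx fun t x => (h2 t x).2
    · rw [Set.eq_empty_iff_forall_notMem]
      rintro u ⟨⟨_, _, hne, _⟩, _, h0⟩
      exact hne h0
    · rw [Set.eq_empty_iff_forall_notMem]
      rintro u ⟨⟨_, _, hne⟩, _, h0⟩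
      exact hne h0
  · ext u
    constructor
    · rintro ((⟨hv, heq, hne, hxx⟩ | ⟨hv, heq, hne⟩) | ⟨hv, h0⟩)
      · -- Sys1 ⊆ KdV
        refine ⟨hv, fun t x => ⟨?_, ?_⟩⟩
        · have h1 := (heq t x).1
          have h2 := (heq t x).2
          linarith
        · rw [show (fun y => deriv (fun s => u s y) t) = fun _ => (0:ℝ) from
            funext fun y => (heq t y).1, deriv_const, (heq t x).1]
          ring
      · -- Sys2 ⊆ KdV
        have h3 : ∀ t x, deriv (deriv (deriv (u t))) x = 0 := by
          intro t x
          rw [show deriv (deriv (u t)) = fun _ => (0:ℝ) from funext fun y => (heq t y).2]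
          simp
        have hE : ∀ p : ℝ × ℝ, pD (1,0) (fun p : ℝ × ℝ => u p.1 p.2) p
            = 6 * (fun p : ℝ × ℝ => u p.1 p.2) p * pD (0,1) (fun p : ℝ × ℝ => u p.1 p.2) p := by
          rintro ⟨t, x⟩
          have h := (heq t x).1
          rw [trans_t hv t x, trans_x hv t x] at h
          show pD (1,0) (fun p : ℝ × ℝ => u p.1 p.2) (t, x)
            = 6 * u t x * pD (0,1) (fun p : ℝ × ℝ => u p.1 p.2) (t, x)
          linarith
        have hV2 : ∀ p : ℝ × ℝ,
            pD (0,1) (pD (0,1) (fun p : ℝ × ℝ => u p.1 p.2)) p = 0 := by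
          rintro ⟨t, x⟩
          rw [← trans_xx hv t x]
          exact (heq t x).2
        have hW1 : ∀ p : ℝ × ℝ, pD (0,1) (pD (1,0) (fun p : ℝ × ℝ => u p.1 p.2)) p
            = pD (0,1) (fun q => 6 * (fun p : ℝ × ℝ => u p.1 p.2) q) p
                * pD (0,1) (fun p : ℝ × ℝ => u p.1 p.2) p
              + (fun q => 6 * (fun p : ℝ × ℝ => u p.1 p.2) q) p
                * pD (0,1) (pD (0,1) (fun p : ℝ × ℝ => u p.1 p.2)) p := by
          intro p
          have h := pD_congr (f := pD (1,0) (fun p : ℝ × ℝ => u p.1 p.2))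
            (g := fun q => (fun q' => 6 * (fun p : ℝ × ℝ => u p.1 p.2) q') q
              * pD (0,1) (fun p : ℝ × ℝ => u p.1 p.2) q) (0,1) (fun q => hE q) p
          rw [pD_mul (analyticOnNhd_const.mul hv) (pD_analytic hv _)] at h
          exact h
        refine ⟨hv, fun t x => ⟨?_, ?_⟩⟩
        · have := (heq t x).1
          rw [h3 t x]
          linarith
        · rw [trans_tx hv t x, trans_t hv t x, trans_x hv t x]
          have h1 := hW1 (t, x)
          have h2 := hE (t, x)
          have h4 := hV2 (t, x)
          have h5 := pD_const_mul hv 6 (0,1) (t, x)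
          show (fun p : ℝ × ℝ => u p.1 p.2) (t, x)
              * pD (0,1) (pD (1,0) (fun p : ℝ × ℝ => u p.1 p.2)) (t, x)
            - pD (1,0) (fun p : ℝ × ℝ => u p.1 p.2) (t, x)
              * pD (0,1) (fun p : ℝ × ℝ => u p.1 p.2) (t, x) = 0
          linear_combination ((fun p : ℝ × ℝ => u p.1 p.2) (t, x)) * h1
            - (pD (0,1) (fun p : ℝ × ℝ => u p.1 p.2) (t, x)) * h2
            + ((fun p : ℝ × ℝ => u p.1 p.2) (t, x)
                * pD (0,1) (fun p : ℝ × ℝ => u p.1 p.2) (t, x)) * h5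
            + ((fun q => 6 * (fun p : ℝ × ℝ => u p.1 p.2) q) (t, x)) * h4
            + (6 * u t x ^ 2 - 6 * u t x) * h4
      · -- Sys3 ⊆ KdV
        refine ⟨hv, fun t x => ?_⟩
        have h1 : u t = fun _ => (0:ℝ) := funext (h0 t)
        have h2 : (fun s => u s x) = fun _ => (0:ℝ) := funext fun s => h0 s x
        have h3 : (fun y => deriv (fun s => u s y) t) = fun _ => (0:ℝ) := by
          funext y
          rw [show (fun s => u s y) = fun _ => (0:ℝ) from funext fun s => h0 s y]
          simp
        constructor
        · rw [h1, h2]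
          simp
        · rw [h1, h2, h3]
          simp
    · rintro ⟨hv, heq⟩
      by_cases h0 : ∀ t x, u t x = 0
      · right; exact ⟨hv, h0⟩
      by_cases hxx : ∀ t x, deriv (deriv (u t)) x = 0
      · -- Sys2
        left; right
        refine ⟨hv, fun t x => ⟨?_, hxx t x⟩, h0⟩
        have h3 : deriv (deriv (deriv (u t))) x = 0 := by
          rw [show deriv (deriv (u t)) = fun _ => (0:ℝ) from funext fun y => hxx t y]
          simp
        have := (heq t x).1
        linarith
      · -- Sys1
        left; left
        have E1 : ∀ p : ℝ × ℝ, pD (1,0) (fun p : ℝ × ℝ => u p.1 p.2) p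
            - 6 * (fun p : ℝ × ℝ => u p.1 p.2) p * pD (0,1) (fun p : ℝ × ℝ => u p.1 p.2) p
            + pD (0,1) (pD (0,1) (pD (0,1) (fun p : ℝ × ℝ => u p.1 p.2)))  p = 0 := by
          rintro ⟨t, x⟩
          show pD (1,0) (fun p : ℝ × ℝ => u p.1 p.2) (t, x)
            - 6 * u t x * pD (0,1) (fun p : ℝ × ℝ => u p.1 p.2) (t, x)
            + pD (0,1) (pD (0,1) (pD (0,1) (fun p : ℝ × ℝ => u p.1 p.2))) (t, x) = 0
          rw [← trans_t hv t x, ← trans_x hv t x, ← trans_xxx hv t x]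
          exact (heq t x).1
        have E2 : ∀ p : ℝ × ℝ, (fun p : ℝ × ℝ => u p.1 p.2) p
            * pD (0,1) (pD (1,0) (fun p : ℝ × ℝ => u p.1 p.2)) p
            - pD (1,0) (fun p : ℝ × ℝ => u p.1 p.2) p
              * pD (0,1) (fun p : ℝ × ℝ => u p.1 p.2) p = 0 := by
          rintro ⟨t, x⟩
          show u t x * pD (0,1) (pD (1,0) (fun p : ℝ × ℝ => u p.1 p.2)) (t, x)
            - pD (1,0) (fun p : ℝ × ℝ => u p.1 p.2) (t, x)
              * pD (0,1) (fun p : ℝ × ℝ => u p.1 p.2) (t, x) = 0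
          rw [← trans_tx hv t x, ← trans_t hv t x, ← trans_x hv t x]
          exact (heq t x).2
        have hxx' : ¬ ∀ p : ℝ × ℝ,
            pD (0,1) (pD (0,1) (fun p : ℝ × ℝ => u p.1 p.2)) p = 0 := by
          intro h
          exact hxx fun t x => by rw [trans_xx hv t x]; exact h (t, x)
        have hw0 := key_aux (fun p : ℝ × ℝ => u p.1 p.2) _ _ _ _ _ _ _ _ _
          hv rfl rfl rfl rfl rfl rfl rfl rfl rfl E1 E2 hxx'
        have hut : ∀ t x, deriv (fun s => u s x) t = 0 := fun t x => by
          rw [trans_t hv t x]; exact hw0 (t, x)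
        refine ⟨hv, fun t x => ⟨hut t x, ?_⟩, h0, hxx⟩
        have h1 := (heq t x).1
        have h2 := hut t x
        linarith
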